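/- arXiv:1705.10253 — 7 statements merged into one kernel-verified Lean document; each statement's English description precedes it below -/
import Mathlib

section
/- If f : 2^U → ℝ≥0 is monotone and satisfies accountability (for every nonempty S there exists s ∈ S with f(S \ {s}) ≥ f(S) - f(S)/|S|), then for every finite set S of cardinality k there is an ordering s_1, ..., s_k of S such that the densities f({s_1,...,s_i})/i are monotonically non-increasing in i. -/
/-- Accountable monotone nonnegative set functions admit a greedy order of any
set with non-increasing prefix densities. -/
theorem stmt_0 {U : Type*} [DecidableEq U] (f : Finset U → ℝ)
    (hnonneg : ∀ S : Finset U, 0 ≤ f S)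
    (hmono : ∀ S T : Finset U, S ⊆ T → f S ≤ f T)
    (hacc : ∀ S : Finset U, S.Nonempty →
      ∃ s ∈ S, f (S.erase s) ≥ f S - f S / S.card)
    (S : Finset U) (k : ℕ) (hk : S.card = k) :
    ∃ l : List U, l.Nodup ∧ l.toFinset = S ∧ l.length = k ∧
      ∀ i : ℕ, 1 ≤ i → i + 1 ≤ k →
        f ((l.take (i + 1)).toFinset) / (i + 1) ≤ f ((l.take i).toFinset) / i := by
  induction k generalizing S with
  | zero =>
    refine ⟨[], by simp, ?_, by simp, by omega⟩
    simpa [eq_comm] using Finset.card_eq_zero.mp hk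
  | succ n ih =>
    have hne : S.Nonempty := by rw [← Finset.card_pos, hk]; omega
    obtain ⟨s, hs, hfs⟩ := hacc S hne
    obtain ⟨l, hnd, htf, hlen, hdens⟩ := ih (S.erase s)
      (by rw [Finset.card_erase_of_mem hs, hk]; omega)
    have hsnl : s ∉ l := by
      intro h
      have : s ∈ S.erase s := htf ▸ List.mem_toFinset.mpr h
      simp at this
    refine ⟨l ++ [s], ?_, ?_, by simp [hlen], ?_⟩
    · simp [List.nodup_append, hnd, hsnl]
      rintro a ha rfl; exact hsnl ha
    · rw [List.toFinset_append]
      simp only [List.toFinset_cons, List.toFinset_nil, htf]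
      rw [Finset.union_comm]
      simpa using Finset.insert_erase hs
    · intro i h1 h2
      rcases Nat.lt_or_ge (i + 1) (n + 1) with hlt | hge
      · have h1le : i + 1 ≤ l.length := by omega
        rw [List.take_append_of_le_length h1le,
          List.take_append_of_le_length (by omega)]
        exact hdens i h1 (by omega)
      · have hi : i = n := by omega
        subst hi
        have htake1 : (l ++ [s]).take i = l := by
          rw [List.take_append_of_le_length (by omega)]
          exact List.take_of_length_le (by omega)
        have htake2 : (l ++ [s]).take (i + 1) = l ++ [s] := by
          apply List.take_of_length_le; simp [hlen]
        rw [htake1, htake2, htf]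
        have hSfull : (l ++ [s]).toFinset = S := by
          rw [List.toFinset_append]
          simp only [List.toFinset_cons, List.toFinset_nil, htf]
          rw [Finset.union_comm]
          simpa using Finset.insert_erase hs
        rw [hSfull]
        have hcard : (S.card : ℝ) = (i : ℝ) + 1 := by rw [hk]; push_cast; ring
        rw [hcard] at hfs
        have hi0 : (0:ℝ) < i := by exact_mod_cast h1
        have hi1 : (0:ℝ) < (i:ℝ) + 1 := by linarith
        rw [div_le_div_iff₀ hi1 hi0]
        have hmul : f S / ((i:ℝ) + 1) * ((i:ℝ) + 1) = f S := by
          field_simp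
        nlinarith [hfs]
end

section
/- If f : 2^U → ℝ≥0 satisfies the accountability property, then the optimal density is non-increasing in cardinality: for all 1 ≤ k' ≤ k ≤ |U|, OPT(k')/k' ≥ OPT(k)/k, where OPT(j) := max over S ⊆ U with |S| = j of f(S). -/
/-- For accountable nonnegative set functions the optimal density is
non-increasing in the cardinality. -/
theorem stmt_1 {U : Type*} [Fintype U] [DecidableEq U] (f : Finset U → ℝ)
    (hnonneg : ∀ S : Finset U, 0 ≤ f S)
    (hacc : ∀ S : Finset U, S.Nonempty →
      ∃ s ∈ S, f (S.erase s) ≥ f S - f S / S.card)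
    (OPT : ℕ → ℝ)
    (hOPT : ∀ j ≤ Fintype.card U,
      IsGreatest {x | ∃ S : Finset U, S.card = j ∧ f S = x} (OPT j))
    (k' k : ℕ) (h1 : 1 ≤ k') (h2 : k' ≤ k) (h3 : k ≤ Fintype.card U) :
    OPT k / k ≤ OPT k' / k' := by
  -- key step: one-step descent
  have step : ∀ j : ℕ, 2 ≤ j → j ≤ Fintype.card U →
      OPT j / j ≤ OPT (j - 1) / (j - 1 : ℕ) := by
    intro j hj2 hjU
    obtain ⟨⟨S, hScard, hSf⟩, hub⟩ := hOPT j hjU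
    have hSne : S.Nonempty := Finset.card_pos.mp (by omega)
    obtain ⟨s, hs, hfs⟩ := hacc S hSne
    have hcard' : (S.erase s).card = j - 1 := by
      rw [Finset.card_erase_of_mem hs, hScard]
    obtain ⟨_, hub'⟩ := hOPT (j - 1) (by omega)
    have hle : f S - f S / j ≤ OPT (j - 1) := by
      rw [hScard] at hfs
      exact le_trans hfs (hub' ⟨S.erase s, hcard', rfl⟩)
    have hj1 : (0:ℝ) < (j - 1 : ℕ) := by
      have : 1 ≤ j - 1 := by omega
      exact_mod_cast Nat.lt_of_lt_of_le Nat.zero_lt_one this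
    have hjpos : (0:ℝ) < j := by positivity
    rw [div_le_div_iff₀ hjpos hj1]
    have hcast : ((j - 1 : ℕ) : ℝ) = (j : ℝ) - 1 := by
      have : 1 ≤ j := by omega
      push_cast [this]; ring
    calc OPT j * ((j-1:ℕ):ℝ) = (f S - f S / j) * j := by
          rw [← hSf, hcast]; field_simp
      _ ≤ OPT (j-1) * j := by
          exact mul_le_mul_of_nonneg_right hle (le_of_lt hjpos)
  -- induction from k' up to k
  induction k, h2 using Nat.le_induction with
  | base => exact le_refl _
  | succ n hn ih =>
    have h4 : n ≤ Fintype.card U := by omega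
    have := step (n+1) (by omega) h3
    simp only [Nat.add_sub_cancel] at this
    exact le_trans this (ih h4)
end

section
/- Define k_0 := 1 and k_i := ⌈(1+φ)·k_{i-1}⌉ for i ≥ 1, where φ = (1+√5)/2 is the golden ratio, and define t_0 := k_0 and t_i := t_{i-1} + k_i. Then for every i ≥ 0, t_i ≤ φ·k_i. -/
/-- With `k 0 = 1`, `k (i+1) = ⌈(1+φ) k i⌉` and `t i = ∑ k j`, we have `t i ≤ φ k i`. -/
theorem stmt_2 (φ : ℝ) (hφ : φ = (1 + Real.sqrt 5) / 2)
    (k t : ℕ → ℕ)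
    (hk0 : k 0 = 1) (hk : ∀ i : ℕ, k (i + 1) = ⌈(1 + φ) * k i⌉₊)
    (ht0 : t 0 = k 0) (ht : ∀ i : ℕ, t (i + 1) = t i + k (i + 1)) :
    ∀ i : ℕ, (t i : ℝ) ≤ φ * k i := by
  have h5 : Real.sqrt 5 ^ 2 = 5 := Real.sq_sqrt (by norm_num)
  have hs : (2:ℝ) ≤ Real.sqrt 5 := by nlinarith [Real.sqrt_nonneg 5]
  have hφ2 : φ ^ 2 = φ + 1 := by rw [hφ]; nlinarith
  have hφ1 : (1:ℝ) ≤ φ := by rw [hφ]; linarith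
  intro i
  induction i with
  | zero => simp [ht0, hk0]; linarith
  | succ n ih =>
    have hkc : ((1 + φ) * k n : ℝ) ≤ k (n + 1) := by
      rw [hk n]; exact Nat.le_ceil _
    have hkn : (0:ℝ) ≤ (k n : ℝ) := Nat.cast_nonneg _
    rw [ht n]
    push_cast
    nlinarith [mul_le_mul_of_nonneg_left hkc (by linarith : (0:ℝ) ≤ φ - 1)]
end

section
/- With k_i := ⌈(1+φ)·k_{i-1}⌉, k_0 = 1, t_i := t_{i-1} + k_i, t_0 = 1, and φ the golden ratio: for every i ≥ 1 and every integer k with k_i ≤ k ≤ t_i, writing k = k_i + k', it holds that k - t_{i-1} ≥ k' + k_{i-1} + 1 and consequently (1+φ)(k - t_{i-1}) > k. -/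
/-- For `k_i ≤ K ≤ t_i`, writing `K = k_i + k'`, one has
`K - t_{i-1} ≥ k' + k_{i-1} + 1` and hence `(1+φ)(K - t_{i-1}) > K`. -/
theorem stmt_3 (φ : ℝ) (hφ : φ = (1 + Real.sqrt 5) / 2)
    (k t : ℕ → ℕ)
    (hk0 : k 0 = 1) (hk : ∀ i : ℕ, k (i + 1) = ⌈(1 + φ) * k i⌉₊)
    (ht0 : t 0 = 1) (ht : ∀ i : ℕ, t (i + 1) = t i + k (i + 1)) :
    ∀ i : ℕ, 1 ≤ i → ∀ k' K : ℕ, K = k i + k' → K ≤ t i →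
      t (i - 1) + k' + k (i - 1) + 1 ≤ K ∧
      (K : ℝ) < (1 + φ) * ((K : ℝ) - t (i - 1)) := by
  have h5 : (0:ℝ) ≤ 5 := by norm_num
  have hsq : Real.sqrt 5 * Real.sqrt 5 = 5 := Real.mul_self_sqrt h5
  have hs2 : (2:ℝ) < Real.sqrt 5 := by
    have : Real.sqrt 4 < Real.sqrt 5 := Real.sqrt_lt_sqrt (by norm_num) (by norm_num)
    have h4 : Real.sqrt 4 = 2 := by
      rw [show (4:ℝ) = 2^2 by norm_num, Real.sqrt_sq (by norm_num)]
    linarith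
  have hφ1 : (1:ℝ) < φ := by rw [hφ]; linarith
  have hφ0 : (0:ℝ) ≤ φ := by linarith
  have hφsq : φ * φ = φ + 1 := by rw [hφ]; ring_nf; nlinarith [hsq]
  -- t j < φ * k j
  have ht_lt : ∀ j : ℕ, (t j : ℝ) < φ * k j := by
    intro j
    induction j with
    | zero => rw [ht0, hk0]; push_cast; linarith
    | succ n ih =>
      have hle : ((1 + φ) * k n : ℝ) ≤ (k (n+1) : ℝ) := by
        rw [hk n]; exact Nat.le_ceil _
      have hkey : φ * k n ≤ (φ - 1) * k (n+1) := by
        have : (φ - 1) * ((1 + φ) * k n) ≤ (φ - 1) * k (n+1) :=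
          mul_le_mul_of_nonneg_left hle (by linarith)
        nlinarith
      rw [ht n]
      push_cast
      nlinarith
  -- k (j+1) ≥ t j + k j + 1
  have hstep : ∀ j : ℕ, t j + k j + 1 ≤ k (j+1) := by
    intro j
    have h0 : (0:ℝ) ≤ φ * k j := by positivity
    have hceil : k (j+1) = k j + ⌈φ * (k j : ℝ)⌉₊ := by
      rw [hk j, one_add_mul, add_comm]
      rw [Nat.ceil_add_natCast h0]
      ring_nf
    have h1 : t j < ⌈φ * (k j : ℝ)⌉₊ := Nat.lt_ceil.2 (ht_lt j)
    omega
  intro i hi k' K hK hKt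
  obtain ⟨j, rfl⟩ : ∃ j, i = j + 1 := ⟨i - 1, by omega⟩
  simp only [Nat.add_sub_cancel]
  have h1 : t j + k' + k j + 1 ≤ K := by
    have := hstep j; omega
  refine ⟨h1, ?_⟩
  have h2 : ((k' : ℝ) + k j + 1) ≤ (K : ℝ) - t j := by
    have : (t j : ℝ) + k' + k j + 1 ≤ K := by exact_mod_cast h1
    linarith
  have hceil_lt : (k (j+1) : ℝ) < (1 + φ) * k j + 1 := by
    rw [hk j]
    exact Nat.ceil_lt_add_one (by positivity)
  have hKr : (K : ℝ) = k (j+1) + k' := by rw [hK]; push_cast; ring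
  have hk'0 : (0:ℝ) ≤ (k' : ℝ) := Nat.cast_nonneg _
  have : (1 + φ) * ((K:ℝ) - t j) ≥ (1 + φ) * ((k':ℝ) + k j + 1) :=
    mul_le_mul_of_nonneg_left h2 (by linarith)
  nlinarith
end

section
/- The objective function of Region Choosing satisfies accountability: for every nonempty S there exists s ∈ S with f(S \ {s}) ≥ f(S) - f(S)/|S|. -/
/-- The Region Choosing objective satisfies accountability. -/
theorem stmt_6 {U : Type*} [DecidableEq U] (N : ℕ) (hN : 1 ≤ N)
    (R : ℕ → Finset U) (δ : ℕ → ℝ)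
    (hδ : ∀ i : ℕ, 0 ≤ δ i)
    (hdisj : ∀ i ∈ Finset.Icc 1 N, ∀ j ∈ Finset.Icc 1 N, i ≠ j → Disjoint (R i) (R j))
    (hcard : ∀ i ∈ Finset.Icc 1 N, (R i).card = i)
    (f : Finset U → ℝ)
    (hf : ∀ S : Finset U, f S = (Finset.Icc 1 N).sup' (Finset.nonempty_Icc.mpr hN)
      (fun i => ((R i ∩ S).card : ℝ) * δ i)) :
    ∀ S : Finset U, S ⊆ (Finset.Icc 1 N).biUnion R → S.Nonempty →
      ∃ s ∈ S, f (S.erase s) ≥ f S - f S / S.card := by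
  intro S _hsub hS
  obtain ⟨i, hi, hieq⟩ := Finset.exists_mem_eq_sup' (Finset.nonempty_Icc.mpr hN)
    (fun i => ((R i ∩ S).card : ℝ) * δ i)
  have hfS : f S = ((R i ∩ S).card : ℝ) * δ i := by rw [hf]; exact hieq
  have hfS0 : 0 ≤ f S := by
    rw [hfS]; exact mul_nonneg (by positivity) (hδ i)
  have hScard : (0 : ℝ) < (S.card : ℝ) := by
    exact_mod_cast Finset.card_pos.mpr hS
  by_cases hsub : S ⊆ R i
  · -- remove any element
    obtain ⟨s, hs⟩ := hS
    refine ⟨s, hs, ?_⟩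
    have h1 : R i ∩ S.erase s = S.erase s :=
      Finset.inter_eq_right.mpr ((Finset.erase_subset s S).trans hsub)
    have h2 : R i ∩ S = S := Finset.inter_eq_right.mpr hsub
    have hle : ((S.card : ℝ) - 1) * δ i ≤ f (S.erase s) := by
      rw [hf (S.erase s)]
      refine le_trans ?_ (Finset.le_sup' _ hi)
      rw [h1, Finset.card_erase_of_mem hs]
      have : ((S.card - 1 : ℕ) : ℝ) = (S.card : ℝ) - 1 := by
        have : 1 ≤ S.card := Finset.card_pos.mpr ⟨s, hs⟩
        push_cast [Nat.cast_sub this]; ring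
      rw [this]
    have hfS' : f S = (S.card : ℝ) * δ i := by rw [hfS, h2]
    have : f S - f S / S.card = ((S.card : ℝ) - 1) * δ i := by
      rw [hfS']; field_simp
    rw [this]; exact hle
  · -- pick s ∉ R i
    obtain ⟨s, hsS, hsR⟩ := Finset.not_subset.mp hsub
    refine ⟨s, hsS, ?_⟩
    have h1 : R i ∩ S.erase s = R i ∩ S := by
      ext x
      simp only [Finset.mem_inter, Finset.mem_erase]
      constructor
      · rintro ⟨hx, _, hx2⟩; exact ⟨hx, hx2⟩
      · rintro ⟨hx, hx2⟩; exact ⟨hx, fun h => hsR (h ▸ hx), hx2⟩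
    have hle : f S ≤ f (S.erase s) := by
      rw [hf (S.erase s), hfS]
      refine le_trans ?_ (Finset.le_sup' _ hi)
      rw [h1]
    have : 0 ≤ f S / S.card := div_nonneg hfS0 hScard.le
    linarith
end

section
/- Let p_1, ..., p_k be nonnegative reals, α > 0 with k > α, and β > 0, satisfying p_i ≥ (β + α·Σ_{j=i+1}^{k} p_j)/(k−α) for all 1 ≤ i < k and p_k ≥ β/(k−α). Then p_i ≥ (β/(k−α))·(k/(k−α))^{k−i} for all 1 ≤ i ≤ k. -/
/-- Closed-form lower bound on the greedy increments. -/
theorem stmt_8 (k : ℕ) (α β : ℝ) (hα : 0 < α) (hβ : 0 < β) (hk : α < k)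
    (p : ℕ → ℝ) (hp : ∀ i : ℕ, 1 ≤ i → i ≤ k → 0 ≤ p i)
    (hrec : ∀ i : ℕ, 1 ≤ i → i < k →
      p i ≥ (β + α * ∑ j ∈ Finset.Icc (i + 1) k, p j) / ((k : ℝ) - α))
    (hlast : p k ≥ β / ((k : ℝ) - α)) :
    ∀ i : ℕ, 1 ≤ i → i ≤ k →
      p i ≥ β / ((k : ℝ) - α) * ((k : ℝ) / ((k : ℝ) - α)) ^ (k - i) := by
  have hkα : (0:ℝ) < (k:ℝ) - α := by linarith
  set r : ℝ := (k:ℝ) / ((k:ℝ) - α) with hrdef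
  have hr1 : (1:ℝ) < r := by
    rw [hrdef, lt_div_iff₀ hkα]; linarith
  suffices h : ∀ n : ℕ, ∀ i : ℕ, 1 ≤ i → i ≤ k → k - i = n →
      p i ≥ β / ((k : ℝ) - α) * r ^ (k - i) by
    intro i h1 h2; exact h (k - i) i h1 h2 rfl
  intro n
  induction n using Nat.strong_induction_on with
  | _ n IH =>
    intro i h1 h2 hn
    rcases eq_or_lt_of_le h2 with heq | hlt
    · subst heq; simpa using hlast
    · have hsum : ∑ j ∈ Finset.Icc (i+1) k, β / ((k:ℝ) - α) * r ^ (k - j) ≤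
          ∑ j ∈ Finset.Icc (i+1) k, p j := by
        apply Finset.sum_le_sum
        intro j hj
        rw [Finset.mem_Icc] at hj
        exact IH (k - j) (by omega) j (by omega) hj.2 rfl
      have hgeom : ∑ j ∈ Finset.Icc (i+1) k, β / ((k:ℝ) - α) * r ^ (k - j)
          = β / ((k:ℝ) - α) * ((r ^ (k - i) - 1) / (r - 1)) := by
        rw [← Finset.mul_sum]
        congr 1
        rw [show Finset.Icc (i+1) k = Finset.Ico (i+1) (k+1) by rw [Finset.Ico_add_one_right_eq_Icc],
          Finset.sum_Ico_eq_sum_range]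
        have h1 : ∑ m ∈ Finset.range (k + 1 - (i + 1)), r ^ (k - (i + 1 + m))
            = ∑ m ∈ Finset.range (k - i), r ^ ((k - i) - 1 - m) := by
          apply Finset.sum_congr (by congr 1; omega)
          intro m hm
          rw [Finset.mem_range] at hm
          congr 1
          omega
        rw [h1, Finset.sum_range_reflect (fun m => r ^ m) (k - i)]
        exact geom_sum_eq (ne_of_gt hr1) (k - i)
      have hkey := hrec i h1 hlt
      have hB : (β + α * (β / ((k:ℝ) - α) * ((r ^ (k - i) - 1) / (r - 1)))) / ((k:ℝ) - α)
          ≤ (β + α * ∑ j ∈ Finset.Icc (i+1) k, p j) / ((k:ℝ) - α) := by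
        gcongr
        rw [← hgeom]
        exact hsum
      have heqv : (β + α * (β / ((k:ℝ) - α) * ((r ^ (k - i) - 1) / (r - 1)))) / ((k:ℝ) - α)
          = β / ((k:ℝ) - α) * r ^ (k - i) := by
        have hrm1 : r - 1 = α / ((k:ℝ) - α) := by
          rw [hrdef]; field_simp; ring
        rw [hrm1]
        field_simp
        ring
      linarith
end

section
/- The maximum-weight-matching objective is 2-augmentable: for a graph G with edge weights w ≥ 0, defining f(X) as the maximum weight of a matching contained in X, for all edge sets S, T with T \ S ≠ ∅ there exists e ∈ T \ S with f(S ∪ {e}) − f(S) ≥ (f(S ∪ T) − 2·f(S))/|T \ S|. -/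
open Finset

/-- A matching `M` has at most 2 edges touching any given edge `g`. -/
private lemma aux_card_adj {V : Type*} [DecidableEq V]
    (M A : Finset (Sym2 V))
    (hM : ∀ e ∈ M, ∀ e' ∈ M, e ≠ e' → ∀ v : V, v ∈ e → v ∉ e')
    (hA : A ⊆ M) (g : Sym2 V)
    (hadj : ∀ e ∈ A, ∃ x, x ∈ e ∧ x ∈ g) :
    A.card ≤ 2 := by
  induction g using Sym2.ind with
  | _ u v =>
    have h1 : A.card ≤ ({u, v} : Finset V).card := by
      apply Finset.card_le_card_of_injOn (fun e => if u ∈ e then u else v)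
      · intro e he
        by_cases h : u ∈ e <;> simp [h]
      · intro e1 h1 e2 h2 hfe
        by_contra hne
        have hx1 : (if u ∈ e1 then u else v) ∈ e1 := by
          by_cases h : u ∈ e1
          · simpa [h]
          · obtain ⟨x, hx, hxg⟩ := hadj e1 h1
            rcases Sym2.mem_iff.1 hxg with rfl | rfl
            · exact absurd hx h
            · simpa [h] using hx
        have hfe' : (if u ∈ e1 then u else v) = (if u ∈ e2 then u else v) := hfe
        have hx2 : (if u ∈ e1 then u else v) ∈ e2 := by
          rw [hfe']
          by_cases h : u ∈ e2
          · simpa [h]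
          · obtain ⟨x, hx, hxg⟩ := hadj e2 h2
            rcases Sym2.mem_iff.1 hxg with rfl | rfl
            · exact absurd hx h
            · simpa [h] using hx
        exact hM e1 (hA h1) e2 (hA h2) hne _ hx1 hx2
    calc A.card ≤ ({u, v} : Finset V).card := h1
      _ ≤ ({v} : Finset V).card + 1 := Finset.card_insert_le _ _
      _ ≤ 2 := by simp

/-- The maximum-weight-matching objective is 2-augmentable. -/
theorem stmt_15 {V : Type*} [Fintype V] [DecidableEq V]
    (E : Finset (Sym2 V)) (w : Sym2 V → ℝ) (hw : ∀ e, 0 ≤ w e)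
    (f : Finset (Sym2 V) → ℝ)
    (hf : ∀ X : Finset (Sym2 V), IsGreatest
      {x | ∃ M ⊆ X,
        (∀ e ∈ M, ∀ e' ∈ M, e ≠ e' → ∀ v : V, v ∈ e → v ∉ e') ∧
        ∑ e ∈ M, w e = x} (f X)) :
    ∀ S T : Finset (Sym2 V), S ⊆ E → T ⊆ E → (T \ S).Nonempty →
      ∃ e ∈ T \ S,
        (f (S ∪ T) - 2 * f S) / (((T \ S).card : ℝ)) ≤ f (insert e S) - f S := by
  classical
  intro S T hS hT hne
  obtain ⟨⟨M, hMsub, hMmat, hMsum⟩, hMub⟩ := hf (S ∪ T)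
  obtain ⟨⟨N, hNsub, hNmat, hNsum⟩, hNub⟩ := hf S
  -- weight of N-edges adjacent to e
  set WAdj : Sym2 V → ℝ :=
    fun e => ∑ g ∈ N.filter (fun g => ∃ x, x ∈ e ∧ x ∈ g), w g with hWAdj
  -- monotonicity in the relevant special case
  have hmono : ∀ e : Sym2 V, f S ≤ f (insert e S) := fun e =>
    (hf (insert e S)).2 ⟨N, hNsub.trans (Finset.subset_insert _ _), hNmat, hNsum⟩
  -- the modified matching insert e (N.filter ¬adj) is a matching
  have hmat' : ∀ e : Sym2 V,
      ∀ a ∈ insert e (N.filter (fun g => ¬ ∃ x, x ∈ e ∧ x ∈ g)),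
      ∀ b ∈ insert e (N.filter (fun g => ¬ ∃ x, x ∈ e ∧ x ∈ g)),
        a ≠ b → ∀ v : V, v ∈ a → v ∉ b := by
    intro e a ha b hb hab v hva hvb
    rcases Finset.mem_insert.1 ha with rfl | ha' <;>
      rcases Finset.mem_insert.1 hb with rfl | hb'
    · exact hab rfl
    · exact (Finset.mem_filter.1 hb').2 ⟨v, hva, hvb⟩
    · exact (Finset.mem_filter.1 ha').2 ⟨v, hvb, hva⟩
    · exact hNmat a (Finset.mem_filter.1 ha').1 b (Finset.mem_filter.1 hb').1
        hab v hva hvb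
  have hsplit : ∀ e : Sym2 V,
      ∑ g ∈ N.filter (fun g => ¬ ∃ x, x ∈ e ∧ x ∈ g), w g = f S - WAdj e := by
    intro e
    have := Finset.sum_filter_add_sum_filter_not N
      (fun g => ∃ x, x ∈ e ∧ x ∈ g) w
    rw [hWAdj]
    linarith [hNsum]
  -- key A: marginal gain lower bound for e ∉ S
  have keyA : ∀ e : Sym2 V, e ∉ S →
      w e + (f S - WAdj e) ≤ f (insert e S) := by
    intro e he
    have heN : e ∉ N.filter (fun g => ¬ ∃ x, x ∈ e ∧ x ∈ g) := by
      intro h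
      exact he (hNsub (Finset.mem_filter.1 h).1)
    apply (hf (insert e S)).2
    refine ⟨insert e (N.filter fun g => ¬ ∃ x, x ∈ e ∧ x ∈ g), ?_, hmat' e, ?_⟩
    · intro a ha
      rcases Finset.mem_insert.1 ha with rfl | h
      · exact Finset.mem_insert_self _ _
      · exact Finset.mem_insert_of_mem (hNsub (Finset.mem_filter.1 h).1)
    · rw [Finset.sum_insert heN, hsplit e]
  -- key B: each edge of S is dominated by its adjacent N-edges
  have keyB : ∀ e : Sym2 V, e ∈ S → w e ≤ WAdj e := by
    intro e he
    have heN : e ∉ N.filter (fun g => ¬ ∃ x, x ∈ e ∧ x ∈ g) := by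
      intro h
      exact (Finset.mem_filter.1 h).2 ⟨(Quot.out e).1, Sym2.out_fst_mem e,
        Sym2.out_fst_mem e⟩
    have hle : w e + (f S - WAdj e) ≤ f S := by
      apply hNub
      refine ⟨insert e (N.filter fun g => ¬ ∃ x, x ∈ e ∧ x ∈ g), ?_, hmat' e, ?_⟩
      · intro a ha
        rcases Finset.mem_insert.1 ha with rfl | h
        · exact he
        · exact hNsub (Finset.mem_filter.1 h).1
      · rw [Finset.sum_insert heN, hsplit e]
    linarith
  -- double counting: total adjacent weight over M is at most 2 f S
  have step6 : ∑ e ∈ M, WAdj e ≤ 2 * f S := by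
    have h1 : ∑ e ∈ M, WAdj e
        = ∑ g ∈ N, ((M.filter fun e => ∃ x, x ∈ e ∧ x ∈ g).card : ℝ) * w g := by
      rw [hWAdj]
      simp only [Finset.sum_filter]
      rw [Finset.sum_comm]
      refine Finset.sum_congr rfl fun g hg => ?_
      rw [← Finset.sum_filter, Finset.sum_const, nsmul_eq_mul]
    rw [h1]
    calc ∑ g ∈ N, ((M.filter fun e => ∃ x, x ∈ e ∧ x ∈ g).card : ℝ) * w g
        ≤ ∑ g ∈ N, 2 * w g := by
          refine Finset.sum_le_sum fun g hg => ?_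
          refine mul_le_mul_of_nonneg_right ?_ (hw g)
          have := aux_card_adj M (M.filter fun e => ∃ x, x ∈ e ∧ x ∈ g) hMmat
            (Finset.filter_subset _ _) g (fun e heA => (Finset.mem_filter.1 heA).2)
          exact_mod_cast this
      _ = 2 * f S := by rw [← Finset.mul_sum, hNsum]
  -- sum of marginal gains over T \ S
  have hmain : f (S ∪ T) - 2 * f S ≤ ∑ e ∈ T \ S, (f (insert e S) - f S) := by
    have hsub : M \ S ⊆ T \ S := by
      intro e he
      rw [Finset.mem_sdiff] at he ⊢
      rcases Finset.mem_union.1 (hMsub he.1) with h | h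
      · exact absurd h he.2
      · exact ⟨h, he.2⟩
    have h2 : ∑ e ∈ M \ S, (w e - WAdj e) ≤ ∑ e ∈ M \ S, (f (insert e S) - f S) := by
      refine Finset.sum_le_sum fun e he => ?_
      have := keyA e (Finset.mem_sdiff.1 he).2
      linarith
    have h3 : ∑ e ∈ M \ S, (f (insert e S) - f S)
        ≤ ∑ e ∈ T \ S, (f (insert e S) - f S) := by
      refine Finset.sum_le_sum_of_subset_of_nonneg hsub fun e _ _ => ?_
      have := hmono e; linarith
    have h4 : ∑ e ∈ M ∩ S, w e ≤ ∑ e ∈ M ∩ S, WAdj e :=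
      Finset.sum_le_sum fun e he => keyB e (Finset.mem_inter.1 he).2
    have h5 : ∑ e ∈ M ∩ S, w e + ∑ e ∈ M \ S, w e = f (S ∪ T) := by
      rw [Finset.sum_inter_add_sum_sdiff, hMsum]
    have h6 : ∑ e ∈ M ∩ S, WAdj e + ∑ e ∈ M \ S, WAdj e = ∑ e ∈ M, WAdj e :=
      Finset.sum_inter_add_sum_sdiff _ _ _
    have h7 : ∑ e ∈ M \ S, (w e - WAdj e)
        = ∑ e ∈ M \ S, w e - ∑ e ∈ M \ S, WAdj e := Finset.sum_sub_distrib _ _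
    linarith
  -- from sum to max
  have hcardpos : (0 : ℝ) < ((T \ S).card : ℝ) := by
    exact_mod_cast Finset.card_pos.2 hne
  have hconst : ∑ _e ∈ T \ S, (f (S ∪ T) - 2 * f S) / (((T \ S).card : ℝ))
      = f (S ∪ T) - 2 * f S := by
    rw [Finset.sum_const, nsmul_eq_mul, mul_div_cancel₀]
    exact ne_of_gt hcardpos
  obtain ⟨e, heTS, hle⟩ := Finset.exists_le_of_sum_le
    (f := fun _ => (f (S ∪ T) - 2 * f S) / (((T \ S).card : ℝ)))
    (g := fun e => f (insert e S) - f S) hne (by rw [hconst]; exact hmain)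
  exact ⟨e, heTS, hle⟩
end
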